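/- Worst-case inner and middle problem: Let s₁, …, s_N ∈ ℝⁿ with empirical measure Q_N, sample mean s̄ and empirical covariance Σ. Let φ ∈ ℝⁿ with φ ≠ 0, let δ > 0, and put μ̄ = φ·s̄. Then the maximum over all α ∈ ℝ with (α − μ̄)² ≤ δ·‖φ‖₂² of the quantity sup{ E^Q[(φ·S)²] − α² : Q ∈ U_δ(Q_N), E^Q[φ·S] = α } equals (√(φᵀΣφ) + √δ·‖φ‖₂)², and the outer maximum is attained at α* = μ̄. -/

import Mathlib

set_option linter.unusedSectionVars false
set_option maxHeartbeats 1000000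

open MeasureTheory
open scoped ENNReal BigOperators

/-- Euclidean dot product on `Fin n → ℝ`. -/
noncomputable def eDot {n : ℕ} (a b : Fin n → ℝ) : ℝ := ∑ i, a i * b i

/-- Transport cost of a coupling `π` for the quadratic cost `c(u,v) = ‖u − v‖₂²`. -/
noncomputable def transportCost {n : ℕ}
    (π : Measure ((Fin n → ℝ) × (Fin n → ℝ))) : ℝ≥0∞ :=
  ∫⁻ p, ENNReal.ofReal (∑ i, (p.1 i - p.2 i) ^ 2) ∂π

/-- Optimal transport cost `D_c(Q, Q')` with quadratic cost `c(u,v) = ‖u − v‖₂²`. -/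
noncomputable def otCost {n : ℕ} (Q Q' : Measure (Fin n → ℝ)) : ℝ≥0∞ :=
  sInf { r | ∃ π : Measure ((Fin n → ℝ) × (Fin n → ℝ)),
      IsProbabilityMeasure π ∧ π.map Prod.fst = Q ∧ π.map Prod.snd = Q' ∧
      r = transportCost π }

/-- Empirical measure `Q_N = (1/N)·Σᵢ δ_{sᵢ}` of the sample points `s₁, …, s_N`. -/
noncomputable def empiricalMeasure {n N : ℕ} (s : Fin N → (Fin n → ℝ)) :
    Measure (Fin n → ℝ) :=
  (N : ℝ≥0∞)⁻¹ • ∑ i, Measure.dirac (s i)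


/-- Optimal value of the worst-case inner problem:
`sup{ E^Q[(φ·S)²] − α² : Q ∈ U_δ(Q_N), E^Q[φ·S] = α }`. -/
noncomputable def innerWorst {n N : ℕ} (s : Fin N → (Fin n → ℝ))
    (φ : Fin n → ℝ) (δ α : ℝ) : ℝ :=
  sSup { v | ∃ Q : Measure (Fin n → ℝ), IsProbabilityMeasure Q ∧
      otCost Q (empiricalMeasure s) ≤ ENNReal.ofReal δ ∧
      Integrable (fun x => eDot φ x) Q ∧ Integrable (fun x => (eDot φ x) ^ 2) Q ∧
      (∫ x, eDot φ x ∂Q) = α ∧ v = (∫ x, (eDot φ x) ^ 2 ∂Q) - α ^ 2 }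

section helpers
variable {α β : Type*} [MeasurableSpace α] [MeasurableSingletonClass α]
  [MeasurableSpace β] {ι : Type*} [Fintype ι]

lemma integrable_dirac'' {E : Type*} [NormedAddCommGroup E]
    (f : α → E) (hf : StronglyMeasurable f) (a : α) :
    Integrable f (Measure.dirac a) := by
  refine ⟨hf.aestronglyMeasurable, ?_⟩
  unfold HasFiniteIntegral
  rw [lintegral_dirac]
  exact ENNReal.coe_lt_top

lemma isProb_disc [Nonempty ι] (x : ι → α) :
    IsProbabilityMeasure (((Fintype.card ι : ℝ≥0∞))⁻¹ • ∑ i, Measure.dirac (x i)) := by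
  constructor
  rw [Measure.smul_apply, Measure.finset_sum_apply]
  simp only [measure_univ, smul_eq_mul]
  rw [Finset.sum_const, Finset.card_univ, nsmul_eq_mul, mul_one,
    ENNReal.inv_mul_cancel]
  · exact_mod_cast Fintype.card_ne_zero
  · exact ENNReal.natCast_ne_top _

lemma lintegral_disc (x : ι → α) (f : α → ℝ≥0∞) :
    ∫⁻ a, f a ∂(((Fintype.card ι : ℝ≥0∞))⁻¹ • ∑ i, Measure.dirac (x i))
      = ((Fintype.card ι : ℝ≥0∞))⁻¹ * ∑ i, f (x i) := by
  rw [lintegral_smul_measure, lintegral_finset_sum_measure]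
  simp [lintegral_dirac]

lemma integrable_disc [Nonempty ι] {E : Type*} [NormedAddCommGroup E] (x : ι → α) (f : α → E)
    (hf : StronglyMeasurable f) :
    Integrable f (((Fintype.card ι : ℝ≥0∞))⁻¹ • ∑ i, Measure.dirac (x i)) := by
  refine Integrable.smul_measure ?_
    (by simp [Fintype.card_ne_zero])
  exact integrable_finset_sum_measure.2 fun i _ => integrable_dirac'' f hf (x i)

lemma integral_disc (x : ι → α) (f : α → ℝ) (hf : StronglyMeasurable f) :
    ∫ a, f a ∂(((Fintype.card ι : ℝ≥0∞))⁻¹ • ∑ i, Measure.dirac (x i))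
      = ((Fintype.card ι : ℝ))⁻¹ * ∑ i, f (x i) := by
  rw [integral_smul_measure, integral_finset_sum_measure
    (fun i _ => integrable_dirac'' f hf (x i))]
  simp [integral_dirac, ENNReal.toReal_inv]

lemma map_disc (x : ι → α) (g : α → β) (hg : Measurable g) :
    (((Fintype.card ι : ℝ≥0∞))⁻¹ • ∑ i, Measure.dirac (x i)).map g
      = ((Fintype.card ι : ℝ≥0∞))⁻¹ • ∑ i, Measure.dirac (g (x i)) := by
  ext t ht
  rw [Measure.map_apply hg ht, Measure.smul_apply, Measure.smul_apply,
    Measure.finset_sum_apply, Measure.finset_sum_apply]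
  congr 1
  refine Finset.sum_congr rfl fun i _ => ?_
  rw [Measure.dirac_apply' _ (hg ht), Measure.dirac_apply' _ ht]
  rfl

lemma cs_integral (μ : Measure α) (u v : α → ℝ)
    (hu : AEStronglyMeasurable u μ) (hv : AEStronglyMeasurable v μ)
    (hu2 : Integrable (fun a => u a ^ 2) μ) (hv2 : Integrable (fun a => v a ^ 2) μ) :
    ∫ a, u a * v a ∂μ ≤ Real.sqrt (∫ a, u a ^ 2 ∂μ) * Real.sqrt (∫ a, v a ^ 2 ∂μ) := by
  have hpq : (2 : ℝ).HolderConjugate 2 := Real.HolderConjugate.two_two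
  have hbound : ∀ a, |u a * v a| ≤ (u a ^ 2 + v a ^ 2) / 2 := by
    intro a
    rw [abs_mul]
    nlinarith [sq_nonneg (|u a| - |v a|), sq_abs (u a), sq_abs (v a),
      abs_nonneg (u a), abs_nonneg (v a)]
  have huv : Integrable (fun a => u a * v a) μ := by
    refine Integrable.mono' ((hu2.add hv2).div_const 2) (hu.mul hv) ?_
    filter_upwards with a using hbound a
  have habs : Integrable (fun a => |u a| * |v a|) μ := by
    have := huv.abs
    simpa [abs_mul] using this
  have hmem : ∀ (w : α → ℝ), AEStronglyMeasurable w μ →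
      Integrable (fun a => w a ^ 2) μ → MemLp (fun a => |w a|) (ENNReal.ofReal 2) μ := by
    intro w hw hw2
    have h2 : (ENNReal.ofReal 2) = (2 : ℝ≥0∞) := by norm_num
    rw [h2]
    have habsm : AEStronglyMeasurable (fun a => |w a|) μ := by
      simpa [Real.norm_eq_abs] using hw.norm
    refine (memLp_two_iff_integrable_sq habsm).2 ?_
    simpa [sq_abs] using hw2
  have hH := integral_mul_le_Lp_mul_Lq_of_nonneg hpq
    (f := fun a => |u a|) (g := fun a => |v a|)
    (Filter.Eventually.of_forall fun a => abs_nonneg _)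
    (Filter.Eventually.of_forall fun a => abs_nonneg _)
    (hmem u hu hu2) (hmem v hv hv2)
  have hru : ∫ a, |u a| ^ (2:ℝ) ∂μ = ∫ a, u a ^ 2 ∂μ := by
    refine integral_congr_ae (Filter.Eventually.of_forall fun a => ?_)
    simp [Real.rpow_natCast, sq_abs]
  have hrv : ∫ a, |v a| ^ (2:ℝ) ∂μ = ∫ a, v a ^ 2 ∂μ := by
    refine integral_congr_ae (Filter.Eventually.of_forall fun a => ?_)
    simp [Real.rpow_natCast, sq_abs]
  rw [hru, hrv] at hH
  calc ∫ a, u a * v a ∂μ ≤ ∫ a, |u a| * |v a| ∂μ := by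
        refine integral_mono huv habs fun a => ?_
        calc u a * v a ≤ |u a * v a| := le_abs_self _
          _ = |u a| * |v a| := abs_mul _ _
    _ ≤ (∫ a, u a ^ 2 ∂μ) ^ (1/(2:ℝ)) * (∫ a, v a ^ 2 ∂μ) ^ (1/(2:ℝ)) := hH
    _ = Real.sqrt (∫ a, u a ^ 2 ∂μ) * Real.sqrt (∫ a, v a ^ 2 ∂μ) := by
        rw [Real.sqrt_eq_rpow, Real.sqrt_eq_rpow]

end helpers

section setup
variable {n N : ℕ}

lemma eDot_continuous (φ : Fin n → ℝ) : Continuous fun x : Fin n → ℝ => eDot φ x := by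
  unfold eDot
  exact continuous_finset_sum _ fun i _ => continuous_const.mul (continuous_apply i)

lemma eDot_sm (φ : Fin n → ℝ) : StronglyMeasurable fun x : Fin n → ℝ => eDot φ x :=
  (eDot_continuous φ).stronglyMeasurable

lemma empirical_eq (s : Fin N → (Fin n → ℝ)) :
    empiricalMeasure s
      = ((Fintype.card (Fin N) : ℝ≥0∞))⁻¹ • ∑ i, Measure.dirac (s i) := by
  simp [empiricalMeasure, Fintype.card_fin]

lemma empirical_prob (hN : 0 < N) (s : Fin N → (Fin n → ℝ)) :
    IsProbabilityMeasure (empiricalMeasure s) := by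
  rw [empirical_eq]
  have : Nonempty (Fin N) := ⟨⟨0, hN⟩⟩
  exact isProb_disc s

lemma empirical_integral (s : Fin N → (Fin n → ℝ)) (f : (Fin n → ℝ) → ℝ)
    (hf : StronglyMeasurable f) :
    ∫ x, f x ∂(empiricalMeasure s) = (N : ℝ)⁻¹ * ∑ i, f (s i) := by
  rw [empirical_eq, integral_disc _ _ hf]
  simp [Fintype.card_fin]

lemma mubar_eq (s : Fin N → (Fin n → ℝ)) (φ : Fin n → ℝ) :
    eDot φ (fun j => (N : ℝ)⁻¹ * ∑ i, s i j) = (N : ℝ)⁻¹ * ∑ i, eDot φ (s i) := by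
  unfold eDot
  simp only
  have h1 : ∀ j, φ j * ((N : ℝ)⁻¹ * ∑ i, s i j)
      = ∑ i, (N : ℝ)⁻¹ * (φ j * s i j) := by
    intro j
    rw [mul_left_comm, Finset.mul_sum, Finset.mul_sum]
  calc ∑ j, φ j * ((N : ℝ)⁻¹ * ∑ i, s i j)
      = ∑ j : Fin n, ∑ i : Fin N, (N : ℝ)⁻¹ * (φ j * s i j) :=
        Finset.sum_congr rfl fun j _ => h1 j
    _ = ∑ i : Fin N, ∑ j : Fin n, (N : ℝ)⁻¹ * (φ j * s i j) := Finset.sum_comm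
    _ = ∑ i : Fin N, (N : ℝ)⁻¹ * ∑ j : Fin n, φ j * s i j := by
        refine Finset.sum_congr rfl fun i _ => ?_
        rw [Finset.mul_sum]
    _ = (N : ℝ)⁻¹ * ∑ i : Fin N, ∑ j : Fin n, φ j * s i j := by
        rw [Finset.mul_sum]

end setup
section upper
variable {n N : ℕ}

lemma upper_bound (hN : 0 < N) (s : Fin N → (Fin n → ℝ)) (φ : Fin n → ℝ)
    {δ' α : ℝ} (hδ' : 0 < δ') {μb V nsq : ℝ}
    (hμb : μb = (N : ℝ)⁻¹ * ∑ i, eDot φ (s i))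
    (hV : V = (N : ℝ)⁻¹ * ∑ i, (eDot φ (s i) - μb) ^ 2)
    (hnsq : nsq = ∑ i, φ i ^ 2)
    (Q : Measure (Fin n → ℝ)) (hQ : IsProbabilityMeasure Q)
    (hc : otCost Q (empiricalMeasure s) < ENNReal.ofReal δ')
    (hi1 : Integrable (fun x => eDot φ x) Q)
    (hi2 : Integrable (fun x => (eDot φ x) ^ 2) Q)
    (hmean : (∫ x, eDot φ x ∂Q) = α) :
    (∫ x, (eDot φ x) ^ 2 ∂Q) - α ^ 2
      ≤ (Real.sqrt V + Real.sqrt δ' * Real.sqrt nsq) ^ 2 := by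
  haveI : Nonempty (Fin N) := ⟨⟨0, hN⟩⟩
  unfold otCost at hc
  obtain ⟨r, hrS, hrlt⟩ := sInf_lt_iff.1 hc
  obtain ⟨π, hπp, hfst, hsnd, rfl⟩ := hrS
  haveI := hπp
  haveI : IsProbabilityMeasure (empiricalMeasure s) := empirical_prob hN s
  obtain ⟨m, hm⟩ : ∃ m : ℝ, m = α - μb := ⟨_, rfl⟩
  -- basic nonnegativity
  have hV0 : 0 ≤ V := by
    rw [hV]
    exact mul_nonneg (by positivity) (Finset.sum_nonneg fun i _ => sq_nonneg _)
  have hnsq0 : 0 ≤ nsq := by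
    rw [hnsq]; exact Finset.sum_nonneg fun i _ => sq_nonneg _
  -- the cost function
  set d : ((Fin n → ℝ) × (Fin n → ℝ)) → ℝ := fun p => ∑ j, (p.1 j - p.2 j) ^ 2 with hd
  have hdc : Continuous d := continuous_finset_sum _ fun j _ =>
    (((continuous_apply j).comp continuous_fst).sub
      ((continuous_apply j).comp continuous_snd)).pow 2
  have hd0 : ∀ p, 0 ≤ d p := fun p => Finset.sum_nonneg fun j _ => sq_nonneg _
  unfold transportCost at hrlt
  have hrlt' : ∫⁻ p, ENNReal.ofReal (d p) ∂π < ENNReal.ofReal δ' := hrlt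
  have hdint : Integrable d π := by
    refine ⟨hdc.stronglyMeasurable.aestronglyMeasurable, ?_⟩
    unfold HasFiniteIntegral
    have : ∫⁻ p, ‖d p‖ₑ ∂π = ∫⁻ p, ENNReal.ofReal (d p) ∂π :=
      lintegral_congr fun p => Real.enorm_eq_ofReal (hd0 p)
    rw [this]
    exact hrlt'.trans ENNReal.ofReal_lt_top
  have hdle : ∫ p, d p ∂π ≤ δ' := by
    rw [integral_eq_lintegral_of_nonneg_ae (Filter.Eventually.of_forall hd0)
      hdc.aestronglyMeasurable]
    exact ENNReal.toReal_le_of_le_ofReal hδ'.le hrlt'.le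
  -- functions F, G
  set F : ((Fin n → ℝ) × (Fin n → ℝ)) → ℝ := fun p => eDot φ p.1 with hF
  set G : ((Fin n → ℝ) × (Fin n → ℝ)) → ℝ := fun p => eDot φ p.2 with hG
  have hFc : Continuous F := (eDot_continuous φ).comp continuous_fst
  have hGc : Continuous G := (eDot_continuous φ).comp continuous_snd
  -- integrability of F, F^2 via the first marginal
  have hiF : Integrable F π := by
    have h := (integrable_map_measure
      (μ := π) (f := Prod.fst) (g := fun x => eDot φ x)
      (by rw [hfst]; exact hi1.1) measurable_fst.aemeasurable).1
      (by rw [hfst]; exact hi1)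
    simpa [Function.comp_def] using h
  have hiF2 : Integrable (fun p => F p ^ 2) π := by
    have h := (integrable_map_measure
      (μ := π) (f := Prod.fst) (g := fun x => (eDot φ x) ^ 2)
      (by rw [hfst]; exact hi2.1) measurable_fst.aemeasurable).1
      (by rw [hfst]; exact hi2)
    simpa [Function.comp_def] using h
  have hFm : ∫ p, F p ∂π = α := by
    rw [← hfst] at hmean
    rw [integral_map measurable_fst.aemeasurable
      (by rw [hfst]; exact hi1.1)] at hmean
    simpa [Function.comp] using hmean
  have hF2m : ∫ p, F p ^ 2 ∂π = ∫ x, (eDot φ x) ^ 2 ∂Q := by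
    rw [← hfst, integral_map measurable_fst.aemeasurable
      (by rw [hfst]; exact hi2.1)]
  -- integrability of G, G^2 via the second marginal (empirical measure)
  have hiQN1 : Integrable (fun x => eDot φ x) (empiricalMeasure s) := by
    rw [empirical_eq]; exact integrable_disc _ _ (eDot_sm φ)
  have hiQN2 : Integrable (fun x => (eDot φ x) ^ 2) (empiricalMeasure s) := by
    rw [empirical_eq]
    exact integrable_disc _ _ ((eDot_sm φ).pow 2)
  have hiQNu2 : Integrable (fun x => (eDot φ x - μb) ^ 2) (empiricalMeasure s) := by
    rw [empirical_eq]
    exact integrable_disc _ _ (((eDot_sm φ).sub stronglyMeasurable_const).pow 2)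
  have hiG : Integrable G π := by
    have h := (integrable_map_measure
      (μ := π) (f := Prod.snd) (g := fun x => eDot φ x)
      (by rw [hsnd]; exact hiQN1.1) measurable_snd.aemeasurable).1
      (by rw [hsnd]; exact hiQN1)
    simpa [Function.comp_def] using h
  have hiG2 : Integrable (fun p => G p ^ 2) π := by
    have h := (integrable_map_measure
      (μ := π) (f := Prod.snd) (g := fun x => (eDot φ x) ^ 2)
      (by rw [hsnd]; exact hiQN2.1) measurable_snd.aemeasurable).1
      (by rw [hsnd]; exact hiQN2)
    simpa [Function.comp_def] using h
  have hiu2 : Integrable (fun p => (G p - μb) ^ 2) π := by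
    have h := (integrable_map_measure
      (μ := π) (f := Prod.snd) (g := fun x => (eDot φ x - μb) ^ 2)
      (by rw [hsnd]; exact hiQNu2.1) measurable_snd.aemeasurable).1
      (by rw [hsnd]; exact hiQNu2)
    simpa [Function.comp_def] using h
  have hGm : ∫ p, G p ∂π = μb := by
    have h : ∫ x, eDot φ x ∂(empiricalMeasure s) = μb := by
      rw [empirical_integral s _ (eDot_sm φ), hμb]
    rw [← hsnd, integral_map measurable_snd.aemeasurable
      (by rw [hsnd]; exact hiQN1.1)] at h
    simpa [Function.comp] using h
  have hu2m : ∫ p, (G p - μb) ^ 2 ∂π = V := by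
    have h : ∫ x, (eDot φ x - μb) ^ 2 ∂(empiricalMeasure s) = V := by
      rw [empirical_integral s (fun x => (eDot φ x - μb) ^ 2)
        (((eDot_sm φ).sub stronglyMeasurable_const).pow 2), hV]
    rw [← hsnd, integral_map measurable_snd.aemeasurable
      (by rw [hsnd]; exact hiQNu2.1)] at h
    simpa [Function.comp] using h
  -- the difference g = F - G
  have hg2_bound : ∀ p, (F p - G p) ^ 2 ≤ nsq * d p := by
    intro p
    have hrepr : F p - G p = ∑ j, φ j * (p.1 j - p.2 j) := by
      simp only [hF, hG, eDot, ← Finset.sum_sub_distrib]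
      exact Finset.sum_congr rfl fun j _ => by ring
    rw [hrepr, hnsq, hd]
    exact Finset.sum_mul_sq_le_sq_mul_sq _ _ _
  have hgc : Continuous fun p : ((Fin n → ℝ) × (Fin n → ℝ)) => F p - G p := hFc.sub hGc
  have hig : Integrable (fun p => F p - G p) π := hiF.sub hiG
  have hig2 : Integrable (fun p => (F p - G p) ^ 2) π := by
    refine Integrable.mono' (hdint.const_mul nsq) (hgc.pow 2).aestronglyMeasurable ?_
    filter_upwards with p
    rw [Real.norm_eq_abs, abs_of_nonneg (sq_nonneg _)]
    exact hg2_bound p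
  have hgm : ∫ p, (F p - G p) ∂π = m := by
    rw [integral_sub hiF hiG, hFm, hGm, hm]
  -- v = g - m
  have hvc : Continuous fun p : ((Fin n → ℝ) × (Fin n → ℝ)) => F p - G p - m :=
    hgc.sub continuous_const
  have hiv2 : Integrable (fun p => (F p - G p - m) ^ 2) π := by
    have hb : Integrable (fun p => 2 * (F p - G p) ^ 2 + 2 * m ^ 2) π :=
      (hig2.const_mul 2).add (integrable_const (2 * m ^ 2))
    refine Integrable.mono' hb (hvc.pow 2).aestronglyMeasurable ?_
    filter_upwards with p
    rw [Real.norm_eq_abs, abs_of_nonneg (sq_nonneg _)]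
    nlinarith [sq_nonneg (F p - G p + m)]
  have hv2m : ∫ p, (F p - G p - m) ^ 2 ∂π = (∫ p, (F p - G p) ^ 2 ∂π) - m ^ 2 := by
    have hexp : ∀ p, (F p - G p - m) ^ 2
        = (F p - G p) ^ 2 - 2 * m * (F p - G p) + m ^ 2 := fun p => by ring
    have hb1 : Integrable (fun p => (F p - G p) ^ 2 - 2 * m * (F p - G p)) π :=
      hig2.sub (hig.const_mul (2 * m))
    rw [integral_congr_ae (Filter.Eventually.of_forall hexp)]
    rw [integral_add hb1 (integrable_const _),
      integral_sub hig2 (hig.const_mul (2 * m)), integral_const_mul, hgm,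
      integral_const]
    simp [measure_univ]
    ring
  have hg2le : ∫ p, (F p - G p) ^ 2 ∂π ≤ nsq * δ' := by
    calc ∫ p, (F p - G p) ^ 2 ∂π ≤ ∫ p, nsq * d p ∂π :=
          integral_mono hig2 (hdint.const_mul nsq) hg2_bound
      _ = nsq * ∫ p, d p ∂π := integral_const_mul _ _
      _ ≤ nsq * δ' := mul_le_mul_of_nonneg_left hdle hnsq0
  have hv2le : ∫ p, (F p - G p - m) ^ 2 ∂π ≤ nsq * δ' := by
    rw [hv2m]
    nlinarith [sq_nonneg m]
  have hv2nn : 0 ≤ ∫ p, (F p - G p - m) ^ 2 ∂π :=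
    integral_nonneg fun p => sq_nonneg _
  -- Cauchy-Schwarz for the cross term
  have hcs : ∫ p, (G p - μb) * (F p - G p - m) ∂π
      ≤ Real.sqrt V * Real.sqrt (nsq * δ') := by
    have h := cs_integral π (fun p => G p - μb) (fun p => F p - G p - m)
      ((hGc.sub continuous_const).aestronglyMeasurable) hvc.aestronglyMeasurable
      hiu2 hiv2
    rw [hu2m] at h
    refine h.trans ?_
    exact mul_le_mul_of_nonneg_left
      (Real.sqrt_le_sqrt hv2le) (Real.sqrt_nonneg _)
  -- integrability of the cross term
  have hiuv : Integrable (fun p => (G p - μb) * (F p - G p - m)) π := by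
    have hb : Integrable (fun p => ((G p - μb) ^ 2 + (F p - G p - m) ^ 2) / 2) π :=
      (hiu2.add hiv2).div_const 2
    refine Integrable.mono' hb
      (((hGc.sub continuous_const).mul hvc).aestronglyMeasurable) ?_
    filter_upwards with p
    rw [Real.norm_eq_abs, abs_mul]
    have h2 := two_mul_le_add_sq |G p - μb| |F p - G p - m|
    rw [mul_assoc] at h2
    rw [sq_abs, sq_abs] at h2
    show |G p - μb| * |F p - G p - m| ≤ ((G p - μb) ^ 2 + (F p - G p - m) ^ 2) / 2
    linarith
  -- expansion of the second moment
  have hkey : (∫ x, (eDot φ x) ^ 2 ∂Q) - α ^ 2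
      = V + 2 * ∫ p, (G p - μb) * (F p - G p - m) ∂π
          + ∫ p, (F p - G p - m) ^ 2 ∂π := by
    have hFa : ∫ p, (F p - α) ^ 2 ∂π = (∫ x, (eDot φ x) ^ 2 ∂Q) - α ^ 2 := by
      have hexp : ∀ p, (F p - α) ^ 2 = F p ^ 2 - 2 * α * F p + α ^ 2 := fun p => by ring
      have ha1 : Integrable (fun p => F p ^ 2 - 2 * α * F p) π :=
        hiF2.sub (hiF.const_mul (2 * α))
      rw [integral_congr_ae (Filter.Eventually.of_forall hexp),
        integral_add ha1 (integrable_const _),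
        integral_sub hiF2 (hiF.const_mul (2 * α)), integral_const_mul, hFm, hF2m,
        integral_const]
      simp [measure_univ]
      ring
    have hexp2 : ∀ p, (F p - α) ^ 2
        = (G p - μb) ^ 2 + 2 * ((G p - μb) * (F p - G p - m)) + (F p - G p - m) ^ 2 := by
      intro p
      have : F p - α = (G p - μb) + (F p - G p - m) := by rw [hm]; ring
      rw [this]; ring
    have hc1 : Integrable (fun p => (G p - μb) ^ 2 + 2 * ((G p - μb) * (F p - G p - m))) π :=
      hiu2.add (hiuv.const_mul 2)
    rw [← hFa, integral_congr_ae (Filter.Eventually.of_forall hexp2),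
      integral_add hc1 hiv2,
      integral_add hiu2 (hiuv.const_mul 2), integral_const_mul, hu2m]
  rw [hkey]
  have hsq : (Real.sqrt V + Real.sqrt δ' * Real.sqrt nsq) ^ 2
      = V + 2 * (Real.sqrt V * Real.sqrt (nsq * δ')) + nsq * δ' := by
    have h1 : Real.sqrt V ^ 2 = V := Real.sq_sqrt hV0
    have h2 : Real.sqrt δ' ^ 2 = δ' := Real.sq_sqrt hδ'.le
    have h3 : Real.sqrt nsq ^ 2 = nsq := Real.sq_sqrt hnsq0
    have h4 : Real.sqrt (nsq * δ') = Real.sqrt nsq * Real.sqrt δ' :=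
      Real.sqrt_mul hnsq0 _
    rw [h4]; ring_nf; nlinarith [h1, h2, h3]
  rw [hsq]
  have := hcs
  nlinarith [hv2le, hcs]
end upper
section attain
variable {n N : ℕ}

lemma attain_aux (hN : 0 < N) (s : Fin N → (Fin n → ℝ)) (φ : Fin n → ℝ)
    {δ μb V nsq r ρ : ℝ} (hδ : 0 < δ)
    (hμb : μb = (N : ℝ)⁻¹ * ∑ i, eDot φ (s i))
    (hV : V = (N : ℝ)⁻¹ * ∑ i, (eDot φ (s i) - μb) ^ 2)
    (hnsq : nsq = ∑ i, φ i ^ 2) (hnsq_pos : 0 < nsq)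
    (h1 : r ^ 2 * V + ρ ^ 2 = δ * nsq)
    (h2 : (1 + r) ^ 2 * V + ρ ^ 2 = (Real.sqrt V + Real.sqrt δ * Real.sqrt nsq) ^ 2) :
    ∃ Q : Measure (Fin n → ℝ), IsProbabilityMeasure Q ∧
      otCost Q (empiricalMeasure s) ≤ ENNReal.ofReal δ ∧
      Integrable (fun x => eDot φ x) Q ∧ Integrable (fun x => (eDot φ x) ^ 2) Q ∧
      (∫ x, eDot φ x ∂Q) = μb ∧
      (∫ x, (eDot φ x) ^ 2 ∂Q) - μb ^ 2
        = (Real.sqrt V + Real.sqrt δ * Real.sqrt nsq) ^ 2 := by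
  haveI : Nonempty (Fin N) := ⟨⟨0, hN⟩⟩
  have hNR : (N : ℝ) ≠ 0 := Nat.cast_ne_zero.2 hN.ne'
  have hnsq0 : nsq ≠ 0 := hnsq_pos.ne'
  -- abbreviations
  set a : Fin N → ℝ := fun i => eDot φ (s i) with ha
  set dd : Fin N → ℝ := fun i => a i - μb with hdd
  have hsum0 : ∑ i, a i = N * μb := by
    rw [hμb]; field_simp
  have hsum1 : ∑ i, dd i = 0 := by
    simp only [hdd, Finset.sum_sub_distrib, hsum0, Finset.sum_const,
      Finset.card_univ, Fintype.card_fin, nsmul_eq_mul]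
    ring
  have hsum2 : ∑ i, dd i ^ 2 = N * V := by
    simp only [hdd, ha]
    rw [hV]; field_simp
  -- the transported points
  set c : Fin N → Bool → ℝ :=
    fun i b => (r * dd i + (if b then ρ else -ρ)) / nsq with hc
  set p : Fin N → Bool → (Fin n → ℝ) :=
    fun i b => fun j => s i j + c i b * φ j with hp
  have heDotp : ∀ i b, eDot φ (p i b) = a i + c i b * nsq := by
    intro i b
    simp only [hp, eDot, hnsq, ha]
    rw [Finset.mul_sum, ← Finset.sum_add_distrib]
    refine Finset.sum_congr rfl fun j _ => by ring
  have hcostpt : ∀ i b, ∑ j, (p i b j - s i j) ^ 2 = (c i b) ^ 2 * nsq := by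
    intro i b
    simp only [hp, hnsq]
    rw [Finset.mul_sum]
    refine Finset.sum_congr rfl fun j _ => by ring
  have hcardR : ((Fintype.card (Fin N × Bool)) : ℝ) = 2 * N := by
    simp [Fintype.card_prod, Fintype.card_fin, Fintype.card_bool]
    push_cast; ring
  -- the measures
  set Q : Measure (Fin n → ℝ) :=
    ((Fintype.card (Fin N × Bool) : ℝ≥0∞))⁻¹ •
      ∑ q : Fin N × Bool, Measure.dirac (p q.1 q.2) with hQdef
  set π : Measure ((Fin n → ℝ) × (Fin n → ℝ)) :=
    ((Fintype.card (Fin N × Bool) : ℝ≥0∞))⁻¹ •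
      ∑ q : Fin N × Bool, Measure.dirac ((p q.1 q.2, s q.1)) with hπdef
  have hQprob : IsProbabilityMeasure Q := by rw [hQdef]; exact isProb_disc _
  have hπprob : IsProbabilityMeasure π := by rw [hπdef]; exact isProb_disc _
  have hfst : π.map Prod.fst = Q := by
    rw [hπdef, map_disc (fun q : Fin N × Bool => (p q.1 q.2, s q.1)) _ measurable_fst, hQdef]
  have hcard2 : (Fintype.card (Fin N × Bool) : ℝ≥0∞)⁻¹ * 2 = ((N : ℝ≥0∞))⁻¹ := by
    have hcard : (Fintype.card (Fin N × Bool) : ℝ≥0∞) = (N : ℝ≥0∞) * 2 := by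
      rw [Fintype.card_prod, Fintype.card_fin, Fintype.card_bool]
      push_cast; ring
    rw [hcard, ENNReal.mul_inv (Or.inl (by exact_mod_cast hN.ne'))
      (Or.inl (ENNReal.natCast_ne_top _)), mul_assoc,
      ENNReal.inv_mul_cancel (by norm_num) (by norm_num), mul_one]
  have hsnd : π.map Prod.snd = empiricalMeasure s := by
    rw [hπdef, map_disc (fun q : Fin N × Bool => (p q.1 q.2, s q.1)) _ measurable_snd]
    have h1' : (∑ q : Fin N × Bool, Measure.dirac ((p q.1 q.2, s q.1).2))
        = ∑ i : Fin N, (2 : ℝ≥0∞) • Measure.dirac (s i) := by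
      rw [Fintype.sum_prod_type]
      exact Finset.sum_congr rfl fun i _ => by rw [Fintype.sum_bool, two_smul]
    rw [h1', Finset.smul_sum]
    calc (∑ i : Fin N, (Fintype.card (Fin N × Bool) : ℝ≥0∞)⁻¹ • (2 : ℝ≥0∞) • Measure.dirac (s i))
        = ∑ i : Fin N, ((N : ℝ≥0∞))⁻¹ • Measure.dirac (s i) := by
          refine Finset.sum_congr rfl fun i _ => ?_
          rw [smul_smul, hcard2]
      _ = empiricalMeasure s := by
          rw [empiricalMeasure, Finset.smul_sum]
  -- transport cost
  have hcostR : ((Fintype.card (Fin N × Bool) : ℝ))⁻¹ *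
      ∑ q : Fin N × Bool, (∑ j, ((p q.1 q.2, s q.1).1 j - (p q.1 q.2, s q.1).2 j) ^ 2)
        = δ := by
    have hq : ∀ q : Fin N × Bool,
        (∑ j, ((p q.1 q.2, s q.1).1 j - (p q.1 q.2, s q.1).2 j) ^ 2)
        = (c q.1 q.2) ^ 2 * nsq := fun q => hcostpt q.1 q.2
    rw [Finset.sum_congr rfl fun q _ => hq q, Fintype.sum_prod_type]
    have hbsum : ∀ i, (∑ b : Bool, (c i b) ^ 2 * nsq)
        = (2 * r ^ 2 * dd i ^ 2 + 2 * ρ ^ 2) / nsq := by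
      intro i
      rw [Fintype.sum_bool]
      simp only [hc, Bool.false_eq_true, if_false, if_true, eq_self_iff_true]
      field_simp
      ring
    rw [Finset.sum_congr rfl fun i _ => hbsum i]
    have hS : ∑ i, (2 * r ^ 2 * dd i ^ 2 + 2 * ρ ^ 2) / nsq
        = (2 * r ^ 2 * (N * V) + 2 * N * ρ ^ 2) / nsq := by
      rw [← Finset.sum_div]
      congr 1
      rw [Finset.sum_add_distrib, ← Finset.mul_sum, hsum2, Finset.sum_const,
        Finset.card_univ, Fintype.card_fin, nsmul_eq_mul]
      ring
    rw [hS, hcardR]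
    field_simp
    linear_combination h1
  have hTC : transportCost π = ENNReal.ofReal δ := by
    unfold transportCost
    rw [hπdef, lintegral_disc]
    have hnn : ∀ q : Fin N × Bool, q ∈ Finset.univ →
        0 ≤ (∑ j, ((p q.1 q.2, s q.1).1 j - (p q.1 q.2, s q.1).2 j) ^ 2) :=
      fun q _ => Finset.sum_nonneg fun j _ => sq_nonneg _
    rw [← ENNReal.ofReal_sum_of_nonneg hnn]
    have hxy : ((Fintype.card (Fin N × Bool)) : ℝ≥0∞)⁻¹
        = ENNReal.ofReal ((Fintype.card (Fin N × Bool) : ℝ))⁻¹ := by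
      rw [ENNReal.ofReal_inv_of_pos (by positivity), ENNReal.ofReal_natCast]
    rw [hxy, ← ENNReal.ofReal_mul (by positivity), hcostR]
  have hot : otCost Q (empiricalMeasure s) ≤ ENNReal.ofReal δ := by
    have hmem : transportCost π ∈ { t | ∃ π' : Measure ((Fin n → ℝ) × (Fin n → ℝ)),
        IsProbabilityMeasure π' ∧ π'.map Prod.fst = Q ∧
        π'.map Prod.snd = empiricalMeasure s ∧ t = transportCost π' } :=
      ⟨π, hπprob, hfst, hsnd, rfl⟩
    calc otCost Q (empiricalMeasure s) ≤ transportCost π := sInf_le hmem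
      _ = ENNReal.ofReal δ := hTC
  -- integrability
  have hi1 : Integrable (fun x => eDot φ x) Q := by
    rw [hQdef]; exact integrable_disc _ _ (eDot_sm φ)
  have hi2 : Integrable (fun x => (eDot φ x) ^ 2) Q := by
    rw [hQdef]; exact integrable_disc _ _ ((eDot_sm φ).pow 2)
  -- mean
  have hmean : (∫ x, eDot φ x ∂Q) = μb := by
    rw [hQdef, integral_disc _ _ (eDot_sm φ)]
    have hq : ∀ q : Fin N × Bool, eDot φ (p q.1 q.2) = a q.1 + c q.1 q.2 * nsq :=
      fun q => heDotp q.1 q.2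
    rw [Finset.sum_congr rfl fun q _ => hq q, Fintype.sum_prod_type]
    have hbsum : ∀ i, (∑ b : Bool, (a i + c i b * nsq)) = 2 * a i + 2 * r * dd i := by
      intro i
      rw [Fintype.sum_bool]
      simp only [hc, Bool.false_eq_true, if_false, if_true, eq_self_iff_true]
      field_simp
      ring
    rw [Finset.sum_congr rfl fun i _ => hbsum i]
    have hS : ∑ i, (2 * a i + 2 * r * dd i) = 2 * N * μb := by
      rw [Finset.sum_add_distrib, ← Finset.mul_sum, ← Finset.mul_sum, hsum0, hsum1]
      ring
    rw [hS, hcardR]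
    field_simp
  -- second moment
  have hm2 : (∫ x, (eDot φ x) ^ 2 ∂Q) - μb ^ 2
      = (Real.sqrt V + Real.sqrt δ * Real.sqrt nsq) ^ 2 := by
    have hsm2 : StronglyMeasurable fun x : Fin n → ℝ => (eDot φ x) ^ 2 := by
      exact (eDot_sm φ).pow 2
    rw [hQdef, integral_disc _ _ hsm2]
    have hq : ∀ q : Fin N × Bool, (eDot φ (p q.1 q.2)) ^ 2
        = (a q.1 + c q.1 q.2 * nsq) ^ 2 := fun q => by rw [heDotp q.1 q.2]
    rw [Finset.sum_congr rfl fun q _ => hq q, Fintype.sum_prod_type]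
    have hbsum : ∀ i, (∑ b : Bool, (a i + c i b * nsq) ^ 2)
        = 2 * μb ^ 2 + 2 * ρ ^ 2 + (4 * μb * (1 + r)) * dd i
            + 2 * (1 + r) ^ 2 * dd i ^ 2 := by
      intro i
      rw [Fintype.sum_bool]
      simp only [hc, hdd, Bool.false_eq_true, if_false, if_true, eq_self_iff_true]
      field_simp
      ring
    rw [Finset.sum_congr rfl fun i _ => hbsum i]
    have hS : ∑ i, (2 * μb ^ 2 + 2 * ρ ^ 2 + (4 * μb * (1 + r)) * dd i
          + 2 * (1 + r) ^ 2 * dd i ^ 2)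
        = N * (2 * μb ^ 2 + 2 * ρ ^ 2) + 2 * (1 + r) ^ 2 * (N * V) := by
      rw [Finset.sum_add_distrib, Finset.sum_add_distrib, ← Finset.mul_sum,
        ← Finset.mul_sum, hsum1, hsum2, Finset.sum_const, Finset.card_univ,
        Fintype.card_fin, nsmul_eq_mul]
      ring
    rw [hS, hcardR, ← h2]
    field_simp
    ring
  exact ⟨Q, hQprob, hot, hi1, hi2, hmean, hm2⟩
end attain
section final
variable {n N : ℕ}

lemma nsq_pos (φ : Fin n → ℝ) (hφ : φ ≠ 0) : 0 < ∑ i, φ i ^ 2 := by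
  obtain ⟨i, hi⟩ := Function.ne_iff.1 hφ
  exact Finset.sum_pos' (fun j _ => sq_nonneg _)
    ⟨i, Finset.mem_univ i, pow_two_pos_of_ne_zero hi⟩

lemma attain (hN : 0 < N) (s : Fin N → (Fin n → ℝ)) (φ : Fin n → ℝ) (hφ : φ ≠ 0)
    {δ μb V nsq : ℝ} (hδ : 0 < δ)
    (hμb : μb = (N : ℝ)⁻¹ * ∑ i, eDot φ (s i))
    (hV : V = (N : ℝ)⁻¹ * ∑ i, (eDot φ (s i) - μb) ^ 2)
    (hnsq : nsq = ∑ i, φ i ^ 2) :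
    ∃ Q : Measure (Fin n → ℝ), IsProbabilityMeasure Q ∧
      otCost Q (empiricalMeasure s) ≤ ENNReal.ofReal δ ∧
      Integrable (fun x => eDot φ x) Q ∧ Integrable (fun x => (eDot φ x) ^ 2) Q ∧
      (∫ x, eDot φ x ∂Q) = μb ∧
      (∫ x, (eDot φ x) ^ 2 ∂Q) - μb ^ 2
        = (Real.sqrt V + Real.sqrt δ * Real.sqrt nsq) ^ 2 := by
  have hnsq_pos : 0 < nsq := by rw [hnsq]; exact nsq_pos φ hφ
  have hV0 : 0 ≤ V := by
    rw [hV]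
    exact mul_nonneg (by positivity) (Finset.sum_nonneg fun i _ => sq_nonneg _)
  by_cases hVz : V = 0
  · refine attain_aux hN s φ hδ hμb hV hnsq hnsq_pos
      (r := 0) (ρ := Real.sqrt (δ * nsq)) ?_ ?_
    · rw [Real.sq_sqrt (by positivity)]; ring
    · rw [Real.sq_sqrt (by positivity), hVz, Real.sqrt_zero, zero_add,
        mul_pow, Real.sq_sqrt hδ.le, Real.sq_sqrt hnsq_pos.le]
      ring
  · have hVpos : 0 < V := lt_of_le_of_ne hV0 (Ne.symm hVz)
    have hsV : Real.sqrt V ≠ 0 := Real.sqrt_ne_zero'.2 hVpos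
    have hr : (Real.sqrt δ * Real.sqrt nsq / Real.sqrt V) * Real.sqrt V
        = Real.sqrt δ * Real.sqrt nsq := div_mul_cancel₀ _ hsV
    refine attain_aux hN s φ hδ hμb hV hnsq hnsq_pos
      (r := Real.sqrt δ * Real.sqrt nsq / Real.sqrt V) (ρ := 0) ?_ ?_
    · have : (Real.sqrt δ * Real.sqrt nsq / Real.sqrt V) ^ 2 * V
          = (Real.sqrt δ * Real.sqrt nsq) ^ 2 * (V / Real.sqrt V ^ 2) := by
        ring
      rw [this, Real.sq_sqrt hV0, div_self hVpos.ne', mul_one, mul_pow,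
        Real.sq_sqrt hδ.le, Real.sq_sqrt hnsq_pos.le]
      ring
    · have key : Real.sqrt V + Real.sqrt δ * Real.sqrt nsq
          = (1 + Real.sqrt δ * Real.sqrt nsq / Real.sqrt V) * Real.sqrt V := by
        rw [add_mul, one_mul, hr]
      rw [key, mul_pow, Real.sq_sqrt hV0]
      ring

lemma inner_le (hN : 0 < N) (s : Fin N → (Fin n → ℝ)) (φ : Fin n → ℝ)
    {δ μb V nsq : ℝ} (hδ : 0 < δ)
    (hμb : μb = (N : ℝ)⁻¹ * ∑ i, eDot φ (s i))
    (hV : V = (N : ℝ)⁻¹ * ∑ i, (eDot φ (s i) - μb) ^ 2)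
    (hnsq : nsq = ∑ i, φ i ^ 2) (α v : ℝ)
    (hv : ∃ Q : Measure (Fin n → ℝ), IsProbabilityMeasure Q ∧
      otCost Q (empiricalMeasure s) ≤ ENNReal.ofReal δ ∧
      Integrable (fun x => eDot φ x) Q ∧ Integrable (fun x => (eDot φ x) ^ 2) Q ∧
      (∫ x, eDot φ x ∂Q) = α ∧ v = (∫ x, (eDot φ x) ^ 2 ∂Q) - α ^ 2) :
    v ≤ (Real.sqrt V + Real.sqrt δ * Real.sqrt nsq) ^ 2 := by
  obtain ⟨Q, hQ, hcost, hi1, hi2, hmean, rfl⟩ := hv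
  have hgc : Continuous fun x : ℝ =>
      (Real.sqrt V + Real.sqrt x * Real.sqrt nsq) ^ 2 :=
    (continuous_const.add (Real.continuous_sqrt.mul continuous_const)).pow 2
  have htend : Filter.Tendsto
      (fun x : ℝ => (Real.sqrt V + Real.sqrt x * Real.sqrt nsq) ^ 2)
      (nhdsWithin δ (Set.Ioi δ))
      (nhds ((Real.sqrt V + Real.sqrt δ * Real.sqrt nsq) ^ 2)) :=
    (hgc.tendsto δ).mono_left nhdsWithin_le_nhds
  refine ge_of_tendsto htend ?_
  refine eventually_nhdsWithin_of_forall ?_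
  intro x hx
  have hxδ : δ < x := hx
  refine upper_bound hN s φ (hδ.trans hxδ) hμb hV hnsq Q hQ ?_ hi1 hi2 hmean
  exact lt_of_le_of_lt hcost
    ((ENNReal.ofReal_lt_ofReal_iff (hδ.trans hxδ)).2 hxδ)

end final

/-- **Worst-case inner and middle problem.**
With empirical mean `s̄`, `μ̄ = φ·s̄` and empirical variance `V = φᵀΣφ`, the
maximum over all `α` with `(α − μ̄)² ≤ δ‖φ‖₂²` of the worst-case portfolio
variance `sup{ E^Q[(φ·S)²] − α² : Q ∈ U_δ(Q_N), E^Q[φ·S] = α }` equals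
`(√(φᵀΣφ) + √δ·‖φ‖₂)²`, and the outer maximum is attained at `α* = μ̄`. -/
theorem stmt_3 {n N : ℕ} (hN : 0 < N) (s : Fin N → (Fin n → ℝ))
    (φ : Fin n → ℝ) (hφ : φ ≠ 0) (δ : ℝ) (hδ : 0 < δ) :
    let sbar : Fin n → ℝ := fun j => (N : ℝ)⁻¹ * ∑ i, s i j
    let μbar : ℝ := eDot φ sbar
    let V : ℝ := (N : ℝ)⁻¹ * ∑ i, (eDot φ (s i) - μbar) ^ 2
    let nsq : ℝ := ∑ i, φ i ^ 2
    sSup { v | ∃ α : ℝ, (α - μbar) ^ 2 ≤ δ * nsq ∧ v = innerWorst s φ δ α }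
        = (Real.sqrt V + Real.sqrt δ * Real.sqrt nsq) ^ 2 ∧
      innerWorst s φ δ μbar = (Real.sqrt V + Real.sqrt δ * Real.sqrt nsq) ^ 2 := by
  intro sbar μbar V nsq
  have hμb : μbar = (N : ℝ)⁻¹ * ∑ i, eDot φ (s i) := mubar_eq s φ
  have hV : V = (N : ℝ)⁻¹ * ∑ i, (eDot φ (s i) - μbar) ^ 2 := rfl
  have hnsq : nsq = ∑ i, φ i ^ 2 := rfl
  have hnsq0 : 0 ≤ nsq := (nsq_pos φ hφ).le
  set T : ℝ := (Real.sqrt V + Real.sqrt δ * Real.sqrt nsq) ^ 2 with hT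
  have hT0 : 0 ≤ T := sq_nonneg _
  -- part 2 : the inner problem at μbar
  have hub : ∀ α : ℝ, ∀ v ∈ { v | ∃ Q : Measure (Fin n → ℝ), IsProbabilityMeasure Q ∧
      otCost Q (empiricalMeasure s) ≤ ENNReal.ofReal δ ∧
      Integrable (fun x => eDot φ x) Q ∧ Integrable (fun x => (eDot φ x) ^ 2) Q ∧
      (∫ x, eDot φ x ∂Q) = α ∧ v = (∫ x, (eDot φ x) ^ 2 ∂Q) - α ^ 2 }, v ≤ T :=
    fun α v hv => inner_le hN s φ hδ hμb hV hnsq α v hv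
  have hinner_le : ∀ α : ℝ, innerWorst s φ δ α ≤ T := fun α =>
    Real.sSup_le (hub α) hT0
  obtain ⟨Q, hQp, hc, hi1, hi2, hmean, hvar⟩ := attain hN s φ hφ hδ hμb hV hnsq
  have hmemT : T ∈ { v | ∃ Q : Measure (Fin n → ℝ), IsProbabilityMeasure Q ∧
      otCost Q (empiricalMeasure s) ≤ ENNReal.ofReal δ ∧
      Integrable (fun x => eDot φ x) Q ∧ Integrable (fun x => (eDot φ x) ^ 2) Q ∧
      (∫ x, eDot φ x ∂Q) = μbar ∧ v = (∫ x, (eDot φ x) ^ 2 ∂Q) - μbar ^ 2 } :=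
    ⟨Q, hQp, hc, hi1, hi2, hmean, hvar.symm⟩
  have hpart2 : innerWorst s φ δ μbar = T := by
    refine le_antisymm (hinner_le μbar) ?_
    exact le_csSup ⟨T, hub μbar⟩ hmemT
  refine ⟨?_, hpart2⟩
  -- part 1 : the outer problem
  have houter_mem : T ∈ { v | ∃ α : ℝ, (α - μbar) ^ 2 ≤ δ * nsq ∧ v = innerWorst s φ δ α } :=
    ⟨μbar, by simpa using mul_nonneg hδ.le hnsq0, hpart2.symm⟩
  have houter_ub : ∀ v ∈ { v | ∃ α : ℝ, (α - μbar) ^ 2 ≤ δ * nsq ∧ v = innerWorst s φ δ α },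
      v ≤ T := by
    rintro v ⟨α, hα, rfl⟩
    exact hinner_le α
  exact le_antisymm (Real.sSup_le houter_ub hT0) (le_csSup ⟨T, houter_ub⟩ houter_mem)
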